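/- Let A be a 4-dimensional polystochastic matrix of order 3 that is not a (0,1)-matrix. If some hyperplane Γ of A is a (0,1)-matrix, then A is a convex combination of two multidimensional permutations; in particular A is not a vertex of Ω_3^4. -/

import Mathlib

def isPolystochastic (d n : ℕ) (A : (Fin d → Fin n) → ℝ) : Prop :=
  (∀ α, 0 ≤ A α) ∧
  ∀ (k : Fin d) (α : Fin d → Fin n), ∑ x : Fin n, A (Function.update α k x) = 1

def isVertex (d n : ℕ) (A : (Fin d → Fin n) → ℝ) : Prop :=
  isPolystochastic d n A ∧
  ∀ B C : (Fin d → Fin n) → ℝ, isPolystochastic d n B → isPolystochastic d n C →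
    ∀ t : ℝ, 0 < t → t < 1 → (∀ α, A α = t * B α + (1 - t) * C α) → B = A ∧ C = A

def isMPerm (d n : ℕ) (A : (Fin d → Fin n) → ℝ) : Prop :=
  isPolystochastic d n A ∧ ∀ α, A α = 0 ∨ A α = 1

def msupport {d n : ℕ} (A : (Fin d → Fin n) → ℝ) : Set (Fin d → Fin n) := {α | A α ≠ 0}


lemma upd_ins_same (k : Fin 4) (x y : Fin 3) (β : Fin 3 → Fin 3) :
    Function.update (Fin.insertNth (α := fun _ => Fin 3) k x β) k y
      = Fin.insertNth (α := fun _ => Fin 3) k y β := by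
  refine funext (Fin.succAboveCases k ?_ ?_)
  · simp
  · intro i
    rw [Function.update_of_ne (Fin.succAbove_ne k i)]
    simp

lemma upd_ins_other (k : Fin 4) (j : Fin 3) (x y : Fin 3) (β : Fin 3 → Fin 3) :
    Function.update (Fin.insertNth (α := fun _ => Fin 3) k x β) (k.succAbove j) y
      = Fin.insertNth (α := fun _ => Fin 3) k x (Function.update β j y) := by
  refine funext (Fin.succAboveCases k ?_ ?_)
  · rw [Function.update_of_ne (Ne.symm (Fin.succAbove_ne k j))]
    simp
  · intro i
    rcases eq_or_ne i j with rfl | h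
    · simp
    · rw [Function.update_of_ne (fun hh => h (Fin.succAbove_right_injective hh)),
        Fin.insertNth_apply_succAbove, Fin.insertNth_apply_succAbove, Function.update_of_ne h]

-- removeNth facts
lemma rm_ins (k : Fin 4) (x : Fin 3) (β : Fin 3 → Fin 3) :
    (fun i => (Fin.insertNth (α := fun _ => Fin 3) k x β) (k.succAbove i)) = β := by
  funext i; simp

lemma ins_self (k : Fin 4) (α : Fin 4 → Fin 3) :
    Fin.insertNth (α := fun _ => Fin 3) k (α k) (fun i => α (k.succAbove i)) = α :=
  k.insertNth_self_removeNth α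

lemma rm_upd_k (k : Fin 4) (α : Fin 4 → Fin 3) (x : Fin 3) :
    (fun i => Function.update α k x (k.succAbove i)) = fun i => α (k.succAbove i) := by
  funext i; exact Function.update_of_ne (Fin.succAbove_ne k i) _ _

lemma rm_upd_other (k : Fin 4) (j : Fin 3) (α : Fin 4 → Fin 3) (x : Fin 3) :
    (fun i => Function.update α (k.succAbove j) x (k.succAbove i))
      = Function.update (fun i => α (k.succAbove i)) j x := by
  funext i
  rcases eq_or_ne i j with rfl | h
  · simp
  · rw [Function.update_of_ne (fun hh => h (Fin.succAbove_right_injective hh)),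
      Function.update_of_ne h]


lemma fin3_tri : ∀ u v : Fin 3, u = v ∨ u = v + 1 ∨ u = v + 2 := by decide
lemma fin3_ne1 : ∀ c : Fin 3, c + 1 ≠ c := by decide
lemma fin3_ne2 : ∀ c : Fin 3, c + 2 ≠ c := by decide
lemma fin3_ne12 : ∀ c : Fin 3, c + 2 ≠ c + 1 := by decide
lemma fin3_aux : ∀ u v : Fin 3, u = v + 2 → v = u + 1 := by decide
lemma fin3_add11 : ∀ u : Fin 3, u + 1 + 1 = u + 2 := by decide
lemma fin3_ne1' : ∀ c : Fin 3, c ≠ c + 1 := by decide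
lemma fin3_ne2' : ∀ c : Fin 3, c ≠ c + 2 := by decide
lemma fin3_ne12' : ∀ c : Fin 3, c + 1 ≠ c + 2 := by decide

lemma sum3' (h : Fin 3 → ℝ) (a₀ a₁ a₂ : Fin 3) (h01 : a₀ ≠ a₁) (h02 : a₀ ≠ a₂) (h12 : a₁ ≠ a₂) :
    ∑ x, h x = h a₀ + h a₁ + h a₂ := by
  fin_cases a₀ <;> fin_cases a₁ <;> fin_cases a₂ <;> simp_all [Fin.sum_univ_three] <;> ring

lemma eta3 (β : Fin 3 → Fin 3) : β = ![β 0, β 1, β 2] := by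
  funext i; fin_cases i <;> rfl

lemma upd_vec0 (a b z x : Fin 3) : Function.update ![a,b,z] (0:Fin 3) x = ![x,b,z] := by
  funext i; fin_cases i <;> simp [Function.update]
lemma upd_vec1 (a b z x : Fin 3) : Function.update ![a,b,z] (1:Fin 3) x = ![a,x,z] := by
  funext i; fin_cases i <;> simp [Function.update]
lemma upd_vec2 (a b z x : Fin 3) : Function.update ![a,b,z] (2:Fin 3) x = ![a,b,x] := by
  funext i; fin_cases i <;> simp [Function.update]

lemma lines3 (P : (Fin 3 → Fin 3) → ℝ) (hP : isPolystochastic 3 3 P) :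
    (∀ a b, ∑ z, P ![a,b,z] = 1) ∧ (∀ b z, ∑ a, P ![a,b,z] = 1) ∧ (∀ a z, ∑ b, P ![a,b,z] = 1) := by
  refine ⟨fun a b => ?_, fun b z => ?_, fun a z => ?_⟩
  · have := hP.2 2 ![a,b,0]
    rwa [Finset.sum_congr rfl (fun x _ => by rw [upd_vec2])] at this
  · have := hP.2 0 ![0,b,z]
    rwa [Finset.sum_congr rfl (fun x _ => by rw [upd_vec0])] at this
  · have := hP.2 1 ![a,0,z]
    rwa [Finset.sum_congr rfl (fun x _ => by rw [upd_vec1])] at this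

lemma pair_le_sum (f : Fin 3 → ℝ) (hf : ∀ x, 0 ≤ f x) {u v : Fin 3} (huv : u ≠ v) :
    f u + f v ≤ ∑ x, f x := by
  rw [← Finset.sum_pair huv]
  exact Finset.sum_le_sum_of_subset_of_nonneg (Finset.subset_univ _) (fun i _ _ => hf i)

lemma core3 (Γ B : (Fin 3 → Fin 3) → ℝ)
    (hΓ01 : ∀ β, Γ β = 0 ∨ Γ β = 1)
    (hΓ : isPolystochastic 3 3 Γ) (hB : isPolystochastic 3 3 B)
    (hBΓ : ∀ β, Γ β = 1 → B β = 0) :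
    ∃ s M₁ M₂, 0 ≤ s ∧ s ≤ 1 ∧ isMPerm 3 3 M₁ ∧ isMPerm 3 3 M₂ ∧
      (∀ β, Γ β + M₁ β + M₂ β = 1) ∧ (∀ β, B β = s * M₁ β + (1-s) * M₂ β) := by
  obtain ⟨hΓz, hΓa, hΓb⟩ := lines3 Γ hΓ
  obtain ⟨hBz, hBa, hBb⟩ := lines3 B hB
  -- existence of the Latin square G
  have hex : ∀ a b : Fin 3, ∃ z, Γ ![a,b,z] = 1 := by
    intro a b
    by_contra h
    push_neg at h
    have h0 := (hΓ01 ![a,b,0]).resolve_right (h 0)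
    have h1 := (hΓ01 ![a,b,1]).resolve_right (h 1)
    have h2 := (hΓ01 ![a,b,2]).resolve_right (h 2)
    have hs := hΓz a b
    rw [Fin.sum_univ_three, h0, h1, h2] at hs
    norm_num at hs
  choose G hG using hex
  -- uniqueness / characterization
  have huniq : ∀ a b z, Γ ![a,b,z] = 1 → z = G a b := by
    intro a b z hz
    by_contra hne
    have hle := pair_le_sum (fun z => Γ ![a,b,z]) (fun z => hΓ.1 _) hne
    rw [hΓz a b] at hle
    rw [hz, hG a b] at hle
    norm_num at hle
  have hchar : ∀ a b z, Γ ![a,b,z] = if z = G a b then 1 else 0 := by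
    intro a b z
    split_ifs with h
    · rw [h]; exact hG a b
    · exact (hΓ01 _).resolve_right (fun h1 => h (huniq a b z h1))
  -- injectivity in each of the first two coordinates
  have hInjA : ∀ b, Function.Injective (fun a => G a b) := by
    intro b a a' h
    by_contra hne
    simp only at h
    have h1 : Γ ![a, b, G a b] = 1 := hG a b
    have h2 : Γ ![a', b, G a b] = 1 := by rw [h]; exact hG a' b
    have hle := pair_le_sum (fun x => Γ ![x,b,G a b]) (fun x => hΓ.1 _) hne
    rw [hΓa b (G a b)] at hle
    rw [h1, h2] at hle
    norm_num at hle
  have hInjB : ∀ a, Function.Injective (fun b => G a b) := by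
    intro a b b' h
    by_contra hne
    simp only at h
    have h1 : Γ ![a, b, G a b] = 1 := hG a b
    have h2 : Γ ![a, b', G a b] = 1 := by rw [h]; exact hG a b'
    have hle := pair_le_sum (fun x => Γ ![a,x,G a b]) (fun x => hΓ.1 _) hne
    rw [hΓb a (G a b)] at hle
    rw [h1, h2] at hle
    norm_num at hle
  have hSurA : ∀ b z, ∃ a, G a b = z := fun b =>
    (Finite.injective_iff_surjective.mp (hInjA b))
  have hSurB : ∀ a z, ∃ b, G a b = z := fun a =>
    (Finite.injective_iff_surjective.mp (hInjB a))
  -- zero on the support of Γ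
  have hB0 : ∀ a b, B ![a, b, G a b] = 0 := fun a b => hBΓ _ (hG a b)
  -- f + g = 1 on each z-line
  have hfg : ∀ a b, B ![a, b, G a b + 1] + B ![a, b, G a b + 2] = 1 := by
    intro a b
    have hs := hBz a b
    rw [sum3' _ (G a b) (G a b + 1) (G a b + 2) (fin3_ne1 _).symm (fin3_ne2 _).symm
      (fin3_ne12 _).symm] at hs
    rw [hB0 a b] at hs
    linarith
  -- step lemma in the a-direction
  have hstepA : ∀ b a₁ a₂, G a₁ b = G a₂ b + 1 →
      B ![a₁, b, G a₁ b + 1] = B ![a₂, b, G a₂ b + 1] := by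
    intro b a₁ a₂ h12
    set z := G a₁ b + 1 with hz
    obtain ⟨a₀, ha₀⟩ := hSurA b z
    have hz2 : z = G a₂ b + 2 := by rw [hz, h12, fin3_add11]
    have hne01 : a₀ ≠ a₁ := by
      intro h; rw [h, hz] at ha₀; exact fin3_ne1 _ ha₀.symm
    have hne02 : a₀ ≠ a₂ := by
      intro h; rw [h, hz2] at ha₀; exact fin3_ne2 _ ha₀.symm
    have hne12 : a₁ ≠ a₂ := by
      intro h; rw [h] at h12; exact (fin3_ne1 _) h12.symm
    have hs := hBa b z
    rw [sum3' _ a₀ a₁ a₂ hne01 hne02 hne12] at hs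
    have h0 : B ![a₀, b, z] = 0 := by rw [← ha₀]; exact hB0 a₀ b
    rw [h0] at hs
    have hg := hfg a₂ b
    rw [← hz2] at hg
    -- hs : 0 + B ![a₁,b,z] + B ![a₂,b,z] = 1 where z = G a₁ b + 1 = G a₂ b + 2
    have : B ![a₂, b, G a₂ b + 1] + B ![a₂, b, z] = 1 := by rw [hz2] at hg ⊢; exact hg
    linarith
  have hstepB : ∀ a b₁ b₂, G a b₁ = G a b₂ + 1 →
      B ![a, b₁, G a b₁ + 1] = B ![a, b₂, G a b₂ + 1] := by
    intro a b₁ b₂ h12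
    set z := G a b₁ + 1 with hz
    obtain ⟨b₀, hb₀⟩ := hSurB a z
    have hz2 : z = G a b₂ + 2 := by rw [hz, h12, fin3_add11]
    have hne01 : b₀ ≠ b₁ := by
      intro h; rw [h, hz] at hb₀; exact fin3_ne1 _ hb₀.symm
    have hne02 : b₀ ≠ b₂ := by
      intro h; rw [h, hz2] at hb₀; exact fin3_ne2 _ hb₀.symm
    have hne12 : b₁ ≠ b₂ := by
      intro h; rw [h] at h12; exact (fin3_ne1 _) h12.symm
    have hs := hBb a z
    rw [sum3' _ b₀ b₁ b₂ hne01 hne02 hne12] at hs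
    have h0 : B ![a, b₀, z] = 0 := by rw [← hb₀]; exact hB0 a b₀
    rw [h0] at hs
    have hg := hfg a b₂
    rw [← hz2] at hg
    have : B ![a, b₂, G a b₂ + 1] + B ![a, b₂, z] = 1 := by rw [hz2] at hg ⊢; exact hg
    linarith
  -- constancy in a
  have hconstA : ∀ b a a', B ![a, b, G a b + 1] = B ![a', b, G a' b + 1] := by
    intro b a a'
    rcases fin3_tri (G a b) (G a' b) with h | h | h
    · rw [hInjA b h]
    · exact hstepA b a a' h
    · obtain ⟨am, ham⟩ := hSurA b (G a' b + 1)
      have h1 : G a b = G am b + 1 := by rw [ham, fin3_add11, h]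
      have h2 : G am b = G a' b + 1 := ham
      exact (hstepA b a am h1).trans (hstepA b am a' h2)
  have hconstB : ∀ a b b', B ![a, b, G a b + 1] = B ![a, b', G a b' + 1] := by
    intro a b b'
    rcases fin3_tri (G a b) (G a b') with h | h | h
    · rw [hInjB a h]
    · exact hstepB a b b' h
    · obtain ⟨bm, hbm⟩ := hSurB a (G a b' + 1)
      have h1 : G a b = G a bm + 1 := by rw [hbm, fin3_add11, h]
      exact (hstepB a b bm h1).trans (hstepB a bm b' hbm)
  set s : ℝ := B ![0, 0, G 0 0 + 1] with hsdef
  have hfs : ∀ a b, B ![a, b, G a b + 1] = s := fun a b =>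
    (hconstA b a 0).trans (hconstB 0 b 0)
  have hgs : ∀ a b, B ![a, b, G a b + 2] = 1 - s := by
    intro a b
    have := hfg a b
    rw [hfs a b] at this
    linarith
  have hsum1 : ∀ x₀ : Fin 3, ∑ x : Fin 3, (if x = x₀ then (1:ℝ) else 0) = 1 := by
    intro x₀; simp
  have hMperm : ∀ v : Fin 3,
      isMPerm 3 3 (fun β => if β 2 = G (β 0) (β 1) + v then (1:ℝ) else 0) := by
    intro v
    refine ⟨⟨fun β => ?_, fun j α => ?_⟩, fun β => ?_⟩
    · dsimp only; split_ifs <;> norm_num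
    · have hj : ∀ jj : Fin 3, jj = 0 ∨ jj = 1 ∨ jj = 2 := by decide
      rcases hj j with rfl | rfl | rfl
      · obtain ⟨x₀, hx₀⟩ := hSurA (α 1) (α 2 - v)
        refine (Finset.sum_congr rfl (fun x _ => ?_)).trans (hsum1 x₀)
        have hupd : Function.update α 0 x = ![x, α 1, α 2] := by
          conv_lhs => rw [eta3 α]
          rw [upd_vec0]
        rw [hupd]
        show (if α 2 = G x (α 1) + v then (1:ℝ) else 0) = if x = x₀ then (1:ℝ) else 0
        by_cases h : x = x₀
        · subst h
          rw [if_pos (show α 2 = G x (α 1) + v by rw [hx₀]; exact (sub_add_cancel _ _).symm), if_pos rfl]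
        · rw [if_neg h, if_neg (show ¬ (α 2 = G x (α 1) + v) from fun hc =>
            h (hInjA (α 1) (show G x (α 1) = G x₀ (α 1) by rw [hx₀, hc]; exact (add_sub_cancel_right _ _).symm)))]
      · obtain ⟨x₀, hx₀⟩ := hSurB (α 0) (α 2 - v)
        refine (Finset.sum_congr rfl (fun x _ => ?_)).trans (hsum1 x₀)
        have hupd : Function.update α 1 x = ![α 0, x, α 2] := by
          conv_lhs => rw [eta3 α]
          rw [upd_vec1]
        rw [hupd]
        show (if α 2 = G (α 0) x + v then (1:ℝ) else 0) = if x = x₀ then (1:ℝ) else 0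
        by_cases h : x = x₀
        · subst h
          rw [if_pos (show α 2 = G (α 0) x + v by rw [hx₀]; exact (sub_add_cancel _ _).symm), if_pos rfl]
        · rw [if_neg h, if_neg (show ¬ (α 2 = G (α 0) x + v) from fun hc =>
            h (hInjB (α 0) (show G (α 0) x = G (α 0) x₀ by rw [hx₀, hc]; exact (add_sub_cancel_right _ _).symm)))]
      · refine (Finset.sum_congr rfl (fun x _ => ?_)).trans (hsum1 (G (α 0) (α 1) + v))
        have hupd : Function.update α 2 x = ![α 0, α 1, x] := by
          conv_lhs => rw [eta3 α]
          rw [upd_vec2]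
        rw [hupd]
        show (if x = G (α 0) (α 1) + v then (1:ℝ) else 0) = _
        rfl
    · dsimp only; split_ifs <;> norm_num
  refine ⟨s, fun β => if β 2 = G (β 0) (β 1) + 1 then 1 else 0,
    fun β => if β 2 = G (β 0) (β 1) + 2 then 1 else 0, ?_, ?_, ?_, ?_, ?_, ?_⟩
  · exact hB.1 _
  · have := hfg 0 0
    have := hB.1 ![0, 0, G 0 0 + 2]
    rw [hsdef]; linarith
  · exact hMperm 1
  · exact hMperm 2
  · -- partition
    intro β
    have hc : Γ β = if β 2 = G (β 0) (β 1) then 1 else 0 := by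
      rw [eta3 β]; rw [hchar (β 0) (β 1) (β 2)]
      simp [Matrix.cons_val_zero, Matrix.cons_val_one]
      exact if_congr Iff.rfl rfl rfl
    rw [hc]
    rcases fin3_tri (β 2) (G (β 0) (β 1)) with h | h | h <;>
      simp [h, fin3_ne1, fin3_ne2, fin3_ne12, fin3_ne1', fin3_ne2', fin3_ne12']
  · -- decomposition of B
    intro β
    have hβ : β = ![β 0, β 1, β 2] := eta3 β
    rcases fin3_tri (β 2) (G (β 0) (β 1)) with h | h | h
    · have h0 : B β = 0 := by rw [hβ, h]; exact hB0 _ _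
      rw [h0]; simp [h, fin3_ne1, fin3_ne2, fin3_ne1', fin3_ne2', fin3_ne12, fin3_ne12']
    · have h1 : B β = s := by rw [hβ, h]; exact hfs _ _
      rw [h1]; simp [h, fin3_ne1, fin3_ne2, fin3_ne1', fin3_ne2', fin3_ne12, fin3_ne12']
    · have h2 : B β = 1 - s := by rw [hβ, h]; exact hgs _ _
      rw [h2]; simp [h, fin3_ne1, fin3_ne2, fin3_ne1', fin3_ne2', fin3_ne12, fin3_ne12']


def aslice (A : (Fin 4 → Fin 3) → ℝ) (k : Fin 4) (x : Fin 3) : (Fin 3 → Fin 3) → ℝ :=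
  fun β => A (Fin.insertNth (α := fun _ => Fin 3) k x β)

lemma aslice_ps (A : (Fin 4 → Fin 3) → ℝ) (hA : isPolystochastic 4 3 A) (k : Fin 4) (x : Fin 3) :
    isPolystochastic 3 3 (aslice A k x) := by
  refine ⟨fun β => hA.1 _, fun j β => ?_⟩
  have h := hA.2 (k.succAbove j) (Fin.insertNth (α := fun _ => Fin 3) k x β)
  rw [Finset.sum_congr rfl (fun y _ => by rw [upd_ins_other k j x y β])] at h
  exact h

lemma aslice_sum (A : (Fin 4 → Fin 3) → ℝ) (hA : isPolystochastic 4 3 A) (k : Fin 4)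
    (β : Fin 3 → Fin 3) : ∑ x : Fin 3, aslice A k x β = 1 := by
  have h := hA.2 k (Fin.insertNth (α := fun _ => Fin 3) k 0 β)
  rw [Finset.sum_congr rfl (fun y _ => by rw [upd_ins_same k 0 y β])] at h
  exact h

def glueFun (k : Fin 4) (c : Fin 3) (Γ M₁ M₂ : (Fin 3 → Fin 3) → ℝ) : (Fin 4 → Fin 3) → ℝ :=
  fun α => if α k = c then Γ (fun i => α (k.succAbove i))
    else if α k = c + 1 then M₁ (fun i => α (k.succAbove i))
    else M₂ (fun i => α (k.succAbove i))

lemma glueFun_upd_other (k : Fin 4) (c : Fin 3) (Γ M₁ M₂ : (Fin 3 → Fin 3) → ℝ)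
    (α : Fin 4 → Fin 3) (j : Fin 3) (x : Fin 3) :
    glueFun k c Γ M₁ M₂ (Function.update α (k.succAbove j) x)
      = (if α k = c then Γ (Function.update (fun i => α (k.succAbove i)) j x)
        else if α k = c + 1 then M₁ (Function.update (fun i => α (k.succAbove i)) j x)
        else M₂ (Function.update (fun i => α (k.succAbove i)) j x)) := by
  unfold glueFun
  rw [Function.update_of_ne (Fin.succAbove_ne k j).symm, rm_upd_other]

lemma glue_mperm (k : Fin 4) (c : Fin 3) (Γ M₁ M₂ : (Fin 3 → Fin 3) → ℝ)
    (hΓ01 : ∀ β, Γ β = 0 ∨ Γ β = 1) (hΓps : isPolystochastic 3 3 Γ)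
    (hM₁ : isMPerm 3 3 M₁) (hM₂ : isMPerm 3 3 M₂)
    (hpart : ∀ β, Γ β + M₁ β + M₂ β = 1) :
    isMPerm 4 3 (glueFun k c Γ M₁ M₂) := by
  have h01 : ∀ α, glueFun k c Γ M₁ M₂ α = 0 ∨ glueFun k c Γ M₁ M₂ α = 1 := by
    intro α
    unfold glueFun
    split_ifs
    exacts [hΓ01 _, hM₁.2 _, hM₂.2 _]
  refine ⟨⟨fun α => ?_, fun m α => ?_⟩, h01⟩
  · rcases h01 α with h | h <;> rw [h] <;> norm_num
  · rcases eq_or_ne k m with rfl | hm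
    · have key : ∀ x, glueFun k c Γ M₁ M₂ (Function.update α k x)
          = if x = c then Γ (fun i => α (k.succAbove i))
            else if x = c + 1 then M₁ (fun i => α (k.succAbove i))
            else M₂ (fun i => α (k.succAbove i)) := by
        intro x
        unfold glueFun
        rw [Function.update_self, rm_upd_k]
      rw [Finset.sum_congr rfl (fun x _ => key x),
        sum3' _ c (c+1) (c+2) (fin3_ne1' c) (fin3_ne2' c) (fin3_ne12' c),
        if_pos rfl, if_neg (fin3_ne1 c), if_pos rfl, if_neg (fin3_ne2 c), if_neg (fin3_ne12 c)]
      exact hpart _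
    · obtain ⟨j, rfl⟩ := Fin.exists_succAbove_eq hm.symm
      rcases fin3_tri (α k) c with h | h | h
      · have key : ∀ x, glueFun k c Γ M₁ M₂ (Function.update α (k.succAbove j) x)
            = Γ (Function.update (fun i => α (k.succAbove i)) j x) := fun x => by
          rw [glueFun_upd_other, h, if_pos rfl]
        rw [Finset.sum_congr rfl (fun x _ => key x)]
        exact hΓps.2 j _
      · have key : ∀ x, glueFun k c Γ M₁ M₂ (Function.update α (k.succAbove j) x)
            = M₁ (Function.update (fun i => α (k.succAbove i)) j x) := fun x => by
          rw [glueFun_upd_other, h, if_neg (fin3_ne1 c), if_pos rfl]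
        rw [Finset.sum_congr rfl (fun x _ => key x)]
        exact hM₁.1.2 j _
      · have key : ∀ x, glueFun k c Γ M₁ M₂ (Function.update α (k.succAbove j) x)
            = M₂ (Function.update (fun i => α (k.succAbove i)) j x) := fun x => by
          rw [glueFun_upd_other, h, if_neg (fin3_ne2 c), if_neg (fin3_ne12 c)]
        rw [Finset.sum_congr rfl (fun x _ => key x)]
        exact hM₂.1.2 j _

theorem hyperplane_01_implies_not_vertex (A : (Fin 4 → Fin 3) → ℝ)
    (hA : isPolystochastic 4 3 A) (hnot : ¬ ∀ α, A α = 0 ∨ A α = 1)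
    (k : Fin 4) (c : Fin 3)
    (hΓ : ∀ β : Fin 3 → Fin 3, A (k.insertNth c β) = 0 ∨ A (k.insertNth c β) = 1) :
    (∃ (t : ℝ) (P₁ P₂ : (Fin 4 → Fin 3) → ℝ), 0 < t ∧ t < 1 ∧
        isMPerm 4 3 P₁ ∧ isMPerm 4 3 P₂ ∧ ∀ α, A α = t * P₁ α + (1 - t) * P₂ α) ∧
      ¬ isVertex 4 3 A := by
  classical
  have hΓ01 : ∀ β, aslice A k c β = 0 ∨ aslice A k c β = 1 := hΓ
  have hΓps := aslice_ps A hA k c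
  have hBps := aslice_ps A hA k (c + 1)
  have hl : ∀ β, aslice A k c β + aslice A k (c+1) β + aslice A k (c+2) β = 1 := by
    intro β
    have h := aslice_sum A hA k β
    rwa [sum3' _ c (c+1) (c+2) (fin3_ne1' c) (fin3_ne2' c) (fin3_ne12' c)] at h
  have hBΓ : ∀ β, aslice A k c β = 1 → aslice A k (c+1) β = 0 := by
    intro β h1
    have h2 := (aslice_ps A hA k (c+2)).1 β
    have h3 := hBps.1 β
    have h := hl β
    rw [h1] at h
    linarith
  obtain ⟨s, M₁, M₂, hs0, hs1, hM₁, hM₂, hpart, hBdec⟩ :=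
    core3 (aslice A k c) (aslice A k (c+1)) hΓ01 hΓps hBps hBΓ
  set P₁ := glueFun k c (aslice A k c) M₁ M₂ with hP₁def
  set P₂ := glueFun k c (aslice A k c) M₂ M₁ with hP₂def
  have hpart2 : ∀ β, aslice A k c β + M₂ β + M₁ β = 1 := fun β => by linarith [hpart β]
  have hP₁perm : isMPerm 4 3 P₁ := glue_mperm k c _ M₁ M₂ hΓ01 hΓps hM₁ hM₂ hpart
  have hP₂perm : isMPerm 4 3 P₂ := glue_mperm k c _ M₂ M₁ hΓ01 hΓps hM₂ hM₁ hpart2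
  have hdec : ∀ α, A α = s * P₁ α + (1 - s) * P₂ α := by
    intro α
    have hins := ins_self k α
    rcases fin3_tri (α k) c with h | h | h
    · have e1 : P₁ α = aslice A k c (fun i => α (k.succAbove i)) := by
        rw [hP₁def]; unfold glueFun; rw [h, if_pos rfl]
      have e2 : P₂ α = aslice A k c (fun i => α (k.succAbove i)) := by
        rw [hP₂def]; unfold glueFun; rw [h, if_pos rfl]
      have e0 : A α = aslice A k c (fun i => α (k.succAbove i)) := by
        rw [← h]; exact (congrArg A hins).symm
      rw [e0, e1, e2]; ring
    · have e1 : P₁ α = M₁ (fun i => α (k.succAbove i)) := by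
        rw [hP₁def]; unfold glueFun; rw [h, if_neg (fin3_ne1 c), if_pos rfl]
      have e2 : P₂ α = M₂ (fun i => α (k.succAbove i)) := by
        rw [hP₂def]; unfold glueFun; rw [h, if_neg (fin3_ne1 c), if_pos rfl]
      have e0 : A α = aslice A k (c+1) (fun i => α (k.succAbove i)) := by
        rw [← h]; exact (congrArg A hins).symm
      rw [e0, e1, e2]; exact hBdec _
    · have e1 : P₁ α = M₂ (fun i => α (k.succAbove i)) := by
        rw [hP₁def]; unfold glueFun; rw [h, if_neg (fin3_ne2 c), if_neg (fin3_ne12 c)]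
      have e2 : P₂ α = M₁ (fun i => α (k.succAbove i)) := by
        rw [hP₂def]; unfold glueFun; rw [h, if_neg (fin3_ne2 c), if_neg (fin3_ne12 c)]
      have e0 : A α = aslice A k (c+2) (fun i => α (k.succAbove i)) := by
        rw [← h]; exact (congrArg A hins).symm
      rw [e0, e1, e2]
      have h1 := hBdec (fun i => α (k.succAbove i))
      have h2 := hpart (fun i => α (k.succAbove i))
      have h3 := hl (fun i => α (k.succAbove i))
      linarith
  have hsne0 : s ≠ 0 := by
    intro hs
    apply hnot
    intro α
    have h : A α = P₂ α := by rw [hdec α, hs]; ring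
    rw [h]; exact hP₂perm.2 α
  have hsne1 : s ≠ 1 := by
    intro hs
    apply hnot
    intro α
    have h : A α = P₁ α := by rw [hdec α, hs]; ring
    rw [h]; exact hP₁perm.2 α
  have hpos : 0 < s := lt_of_le_of_ne hs0 (Ne.symm hsne0)
  have hlt : s < 1 := lt_of_le_of_ne hs1 hsne1
  refine ⟨⟨s, P₁, P₂, hpos, hlt, hP₁perm, hP₂perm, hdec⟩, ?_⟩
  intro hv
  obtain ⟨hP1, _⟩ := hv.2 P₁ P₂ hP₁perm.1 hP₂perm.1 s hpos hlt hdec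
  apply hnot
  intro α
  rw [← congrFun hP1 α]
  exact hP₁perm.2 α
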